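/- Let G be a finite directed graph without loops with vertex set V. Suppose chips on G can be moved by a finite sequence of rotor-router steps, starting with u(x) chips at each vertex x and ending with v(x) chips at each vertex x, in such a way that the initial and final rotor configurations are identical. If H : V → ℝ is a function that is harmonic at every vertex which emitted a chip during the sequence, then Σ_{x∈V} H(x)u(x) = Σ_{x∈V} H(x)v(x). -/

import Mathlib

/-- A finite directed multigraph without loops, with, for each vertex `x`, a
cyclic ordering of the edges emanating from `x`: the outgoing edges at `x` are
indexed by `ZMod (deg x)` (in cyclic order), and `head x e` is the target of
the edge `e`. -/
structure RotorMultigraph (V : Type*) [Fintype V] [DecidableEq V] where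
  deg : V → ℕ
  deg_pos : ∀ x, 0 < deg x
  head : ∀ x : V, ZMod (deg x) → V
  no_loops : ∀ x e, head x e ≠ x

namespace RotorMultigraph

variable {V : Type*} [Fintype V] [DecidableEq V] (G : RotorMultigraph V)

/-- A rotor configuration: each vertex carries a rotor pointing along one of
its outgoing edges. -/
abbrev Conf := ∀ x : V, ZMod (G.deg x)

/-- One rotor-router step in which the vertex `x` emits a chip: the rotor at
`x` is incremented to the next edge in the cyclic ordering, and one chip is
moved from `x` along this new edge.  The state records the rotor
configuration together with the number of chips at each vertex. -/
def emit (p : G.Conf × (V → ℕ)) (x : V) : G.Conf × (V → ℕ) :=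
  (Function.update p.1 x (p.1 x + 1),
    fun y =>
      (if y = x then p.2 y - 1 else p.2 y) +
        if y = G.head x (p.1 x + 1) then 1 else 0)

/-- `H` is harmonic at `x`:  `d_x · H(x) = Σ_y d_{xy} · H(y)`, the sum on the
right being over the outgoing edges of `x`. -/
def Harmonic (H : V → ℝ) (x : V) : Prop :=
  haveI : NeZero (G.deg x) := ⟨(G.deg_pos x).ne'⟩
  (G.deg x : ℝ) * H x = ∑ e : ZMod (G.deg x), H (G.head x e)

end RotorMultigraph

namespace RotorMultigraph
variable {V : Type*} [Fintype V] [DecidableEq V] (G : RotorMultigraph V)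

theorem sum_zmod (n : ℕ) [NeZero n] (f : ZMod n → ℝ) :
    ∑ e : ZMod n, f e = ∑ j ∈ Finset.range n, f (j : ZMod n) := by
  refine Finset.sum_nbij' (fun e => e.val) (fun j => (j : ZMod n)) ?_ ?_ ?_ ?_ ?_ <;>
    simp +contextual [ZMod.val_lt, ZMod.natCast_rightInverse _, ZMod.val_cast_of_lt,
      Nat.mod_eq_of_lt]

noncomputable def psi (H : V → ℝ) (x : V) (r : ZMod (G.deg x)) : ℝ :=
  ∑ j ∈ Finset.range r.val, (H (G.head x ((j : ZMod (G.deg x)) + 1)) - H x)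

theorem psi_step (H : V → ℝ) (x : V) (hH : G.Harmonic H x) (r : ZMod (G.deg x)) :
    G.psi H x (r + 1) - G.psi H x r = H (G.head x (r + 1)) - H x := by
  haveI : NeZero (G.deg x) := ⟨(G.deg_pos x).ne'⟩
  have hvr : ((r.val : ℕ) : ZMod (G.deg x)) = r := ZMod.natCast_rightInverse r
  have e1 : r + 1 = ((r.val + 1 : ℕ) : ZMod (G.deg x)) := by
    rw [Nat.cast_add, Nat.cast_one, hvr]
  rcases lt_or_eq_of_le (Nat.succ_le_of_lt r.val_lt) with h | h
  · -- r.val + 1 < deg x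
    have hval : (r + 1).val = r.val + 1 := by
      rw [e1, ZMod.val_cast_of_lt h]
    rw [psi, psi, hval, Finset.sum_range_succ, hvr]
    ring
  · -- r.val + 1 = deg x, so r + 1 = 0
    have h' : r.val + 1 = G.deg x := h
    have hr1 : r + 1 = 0 := by rw [e1, h', ZMod.natCast_self]
    have hsum : ∑ j ∈ Finset.range (G.deg x),
        (H (G.head x (j : ZMod (G.deg x))) - H x) = 0 := by
      rw [← sum_zmod (G.deg x) (fun e => H (G.head x e) - H x), Finset.sum_sub_distrib,
        Finset.sum_const, Finset.card_univ, ZMod.card, nsmul_eq_mul, ← hH, sub_self]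
    have key := Finset.sum_range_succ'
      (fun j => H (G.head x (j : ZMod (G.deg x))) - H x) r.val
    rw [h'] at key
    rw [hsum] at key
    have hpsi : G.psi H x r
        = ∑ j ∈ Finset.range r.val, (H (G.head x ((j + 1 : ℕ) : ZMod (G.deg x))) - H x) := by
      exact Finset.sum_congr rfl fun j _ => by rw [Nat.cast_add, Nat.cast_one]
    have hpsi0 : G.psi H x 0 = 0 := by simp [psi, ZMod.val_zero]
    rw [hr1, hpsi0, zero_sub]
    simp only [Nat.cast_zero] at key
    rw [hpsi]
    linarith [key]

end RotorMultigraph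

namespace RotorMultigraph
variable {V : Type*} [Fintype V] [DecidableEq V] (G : RotorMultigraph V)

noncomputable def phi (H : V → ℝ) (p : G.Conf × (V → ℕ)) : ℝ :=
  (∑ x : V, H x * (p.2 x : ℝ)) - ∑ x : V, G.psi H x (p.1 x)

theorem phi_emit (H : V → ℝ) (p : G.Conf × (V → ℕ)) (x : V)
    (hH : G.Harmonic H x) (hp : 0 < p.2 x) :
    G.phi H (G.emit p x) = G.phi H p := by
  have hx : G.head x (p.1 x + 1) ≠ x := G.no_loops x _
  have hchip : ∀ y, H y * (((G.emit p x).2 y : ℕ) : ℝ)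
      = H y * p.2 y + (if y = x then -H y else 0)
        + (if y = G.head x (p.1 x + 1) then H y else 0) := by
    intro y
    simp only [emit]
    by_cases h1 : y = x <;> by_cases h2 : y = G.head x (p.1 x + 1) <;>
      simp only [h1, h2, if_true, if_false, hx] <;> push_cast [hp] <;> ring_nf <;>
      simp_all <;> push_cast [Nat.cast_sub hp] <;> ring
  have hrot : ∀ y, G.psi H y ((G.emit p x).1 y)
      = G.psi H y (p.1 y)
        + (if y = x then G.psi H x (p.1 x + 1) - G.psi H x (p.1 x) else 0) := by
    intro y
    by_cases h1 : y = x
    · subst h1; simp only [emit, Function.update_self, if_true]; ring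
    · simp [emit, Function.update_of_ne h1, h1]
  simp only [phi]
  rw [Finset.sum_congr rfl fun y _ => hchip y, Finset.sum_congr rfl fun y _ => hrot y]
  rw [Finset.sum_add_distrib, Finset.sum_add_distrib, Finset.sum_add_distrib]
  rw [Finset.sum_ite_eq' Finset.univ x, Finset.sum_ite_eq' Finset.univ (G.head x (p.1 x + 1)),
    Finset.sum_ite_eq' Finset.univ x]
  simp only [Finset.mem_univ, if_true]
  rw [G.psi_step H x hH (p.1 x)]
  ring

theorem phi_foldl (H : V → ℝ) (L : List V) (s : G.Conf × (V → ℕ))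
    (hchips : ∀ i : Fin L.length, 0 < ((L.take i.val).foldl G.emit s).2 (L.get i))
    (hharm : ∀ x ∈ L, G.Harmonic H x) :
    G.phi H (L.foldl G.emit s) = G.phi H s := by
  induction L generalizing s with
  | nil => rfl
  | cons a L ih =>
    have h0 : 0 < s.2 a := by simpa using hchips ⟨0, by simp⟩
    rw [List.foldl_cons, ih (G.emit s a) ?_ fun x hx => hharm x (List.mem_cons_of_mem a hx),
      G.phi_emit H s a (hharm a (List.mem_cons_self)) h0]
    intro i
    have := hchips ⟨i.val + 1, by simpa using i.isLt⟩
    simpa using this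

end RotorMultigraph

/-- Suppose chips can be moved by a finite sequence of rotor-router steps
(emitting, in order, from the vertices of the list `L`, each emitting vertex
holding at least one chip at the moment of emission), starting with `u x`
chips at each vertex `x` and ending with `v x` chips at each vertex `x`, in
such a way that the initial and final rotor configurations coincide.  If
`H : V → ℝ` is harmonic at every vertex which emitted a chip, then
`Σ_x H(x) u(x) = Σ_x H(x) v(x)`. -/
theorem stmt7 {V : Type*} [Fintype V] [DecidableEq V] (G : RotorMultigraph V)
    (T0 : G.Conf) (u v : V → ℕ) (H : V → ℝ) (L : List V)
    (hchips : ∀ i : Fin L.length,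
      0 < ((L.take i.val).foldl G.emit (T0, u)).2 (L.get i))
    (hrotors : (L.foldl G.emit (T0, u)).1 = T0)
    (hfinal : (L.foldl G.emit (T0, u)).2 = v)
    (hharm : ∀ x ∈ L, G.Harmonic H x) :
    ∑ x : V, H x * (u x : ℝ) = ∑ x : V, H x * (v x : ℝ) := by
  have key := G.phi_foldl H L (T0, u) hchips hharm
  simp only [RotorMultigraph.phi, hrotors, hfinal] at key
  linarith
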